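/- Let G = (V, E_1, …, E_r) be an r-fold graph and W ⊆ V a subset that percolates in G. If for every vertex v ∈ V \ W and every colour i ∈ {1, …, r} there exists w ∈ W with {v, w} ∈ E_i, then G percolates. -/

import Mathlib

open MeasureTheory Filter

noncomputable section

namespace Jigsaw

variable {V : Type*} {r : ℕ}

/-- The auxiliary relation between clusters of the current partition `P`:
two distinct clusters of `P` are related if for every colour there is an edge of that
colour with one endpoint in each cluster. -/
def AuxRel (E : Fin r → Set (Sym2 V)) (P : Set (Set V)) (C C' : Set V) : Prop :=
  C ∈ P ∧ C' ∈ P ∧ C ≠ C' ∧ ∀ i : Fin r, ∃ u ∈ C, ∃ v ∈ C', s(u, v) ∈ E i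

/-- One step of the jigsaw process: merge the connected components of the auxiliary graph. -/
def nextPart (E : Fin r → Set (Sym2 V)) (P : Set (Set V)) : Set (Set V) :=
  {S | ∃ C ∈ P, S = ⋃₀ {C' | Relation.ReflTransGen (AuxRel E P) C C'}}

/-- The set `W` percolates: starting from singleton clusters of the vertices of `W`,
iterating the jigsaw process eventually yields the single cluster `W`. -/
def PercolatesOn (E : Fin r → Set (Sym2 V)) (W : Set V) : Prop :=
  ∃ t : ℕ, (nextPart E)^[t] {S | ∃ v ∈ W, S = {v}} = {W}

/-- The `r`-fold graph with edge sets `E` percolates. -/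
def Percolates (E : Fin r → Set (Sym2 V)) : Prop :=
  PercolatesOn E Set.univ

lemma auxRel_symm {E : Fin r → Set (Sym2 V)} {P : Set (Set V)} :
    Symmetric (AuxRel E P) := by
  rintro C C' ⟨hC, hC', hne, h⟩
  refine ⟨hC', hC, hne.symm, fun i => ?_⟩
  obtain ⟨u, hu, v, hv, he⟩ := h i
  exact ⟨v, hv, u, hu, by rwa [Sym2.eq_swap]⟩

lemma rtg_symm {E : Fin r → Set (Sym2 V)} {P : Set (Set V)} :
    Symmetric (Relation.ReflTransGen (AuxRel E P)) :=
  fun _ _ h => (@Relation.ReflTransGen.symmetric _ _ ⟨auxRel_symm⟩).symm _ _ h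

lemma mem_of_rtg {E : Fin r → Set (Sym2 V)} {P : Set (Set V)} {C C' : Set V}
    (hC : C ∈ P) (h : Relation.ReflTransGen (AuxRel E P) C C') : C' ∈ P := by
  induction h with
  | refl => exact hC
  | tail _ h2 _ => exact h2.2.1

/-- Invariants of the jigsaw process on the full vertex set. -/
def GoodPart (P : Set (Set V)) : Prop :=
  ⋃₀ P = Set.univ ∧ (∀ C ∈ P, C.Nonempty) ∧
    ∀ C ∈ P, ∀ C' ∈ P, C ≠ C' → Disjoint C C'

lemma good_next (E : Fin r → Set (Sym2 V)) {P : Set (Set V)} (hP : GoodPart P) :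
    GoodPart (nextPart E P) := by
  obtain ⟨hcov, hne, hdisj⟩ := hP
  refine ⟨?_, ?_, ?_⟩
  · apply Set.eq_univ_of_univ_subset
    rw [← hcov]
    rintro x ⟨C, hC, hx⟩
    exact ⟨⋃₀ {C' | Relation.ReflTransGen (AuxRel E P) C C'}, ⟨C, hC, rfl⟩,
      Set.mem_sUnion.2 ⟨C, Relation.ReflTransGen.refl, hx⟩⟩
  · rintro S ⟨C, hC, rfl⟩
    obtain ⟨x, hx⟩ := hne C hC
    exact ⟨x, Set.mem_sUnion.2 ⟨C, Relation.ReflTransGen.refl, hx⟩⟩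
  · rintro S ⟨C, hC, rfl⟩ S' ⟨C', hC', rfl⟩ hSS'
    have hclass : {D | Relation.ReflTransGen (AuxRel E P) C D} ∩
        {D | Relation.ReflTransGen (AuxRel E P) C' D} = ∅ := by
      by_contra h
      obtain ⟨D, hD1, hD2⟩ := Set.nonempty_iff_ne_empty.2 h
      have heq : {D | Relation.ReflTransGen (AuxRel E P) C D} =
          {D | Relation.ReflTransGen (AuxRel E P) C' D} := by
        ext X
        constructor
        · intro hX
          exact (hD2.trans (rtg_symm hD1)).trans hX
        · intro hX
          exact (hD1.trans (rtg_symm hD2)).trans hX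
      exact hSS' (by rw [heq])
    rw [Set.disjoint_left]
    rintro x ⟨A, hA, hxA⟩ ⟨B, hB, hxB⟩
    have hAB : A ≠ B := by
      rintro rfl
      have : A ∈ ({D | Relation.ReflTransGen (AuxRel E P) C D} ∩
          {D | Relation.ReflTransGen (AuxRel E P) C' D}) := ⟨hA, hB⟩
      rw [hclass] at this
      exact this
    exact Set.disjoint_left.1 (hdisj A (mem_of_rtg hC hA) B (mem_of_rtg hC' hB) hAB) hxA hxB

/-- If `Q` is coarser than `P`, then `nextPart Q` is coarser than `nextPart P`. -/
lemma coarser_next (E : Fin r → Set (Sym2 V)) {P Q : Set (Set V)}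
    (h : ∀ C ∈ P, ∃ D ∈ Q, C ⊆ D) :
    ∀ S ∈ nextPart E P, ∃ T ∈ nextPart E Q, S ⊆ T := by
  rintro S ⟨C, hC, rfl⟩
  obtain ⟨D, hD, hCD⟩ := h C hC
  refine ⟨⋃₀ {D' | Relation.ReflTransGen (AuxRel E Q) D D'}, ⟨D, hD, rfl⟩, ?_⟩
  rintro x ⟨C', hC', hxC'⟩
  -- lift the chain C ⇝ C' to a chain D ⇝ D' with C' ⊆ D'
  have key : ∀ C'' : Set V, Relation.ReflTransGen (AuxRel E P) C C'' →
      ∃ D'' ∈ Q, C'' ⊆ D'' ∧ Relation.ReflTransGen (AuxRel E Q) D D'' := by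
    intro C'' hchain
    induction hchain with
    | refl => exact ⟨D, hD, hCD, Relation.ReflTransGen.refl⟩
    | tail hab hbc ih =>
      obtain ⟨Db, hDb, hbDb, hDDb⟩ := ih
      obtain ⟨Dc, hDc, hcDc⟩ := h _ hbc.2.1
      by_cases hDbc : Db = Dc
      · exact ⟨Dc, hDc, hcDc, hDbc ▸ hDDb⟩
      · refine ⟨Dc, hDc, hcDc, hDDb.tail ⟨hDb, hDc, hDbc, fun i => ?_⟩⟩
        obtain ⟨u, hu, v, hv, he⟩ := hbc.2.2.2 i
        exact ⟨u, hbDb hu, v, hcDc hv, he⟩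
  obtain ⟨D'', hD'', hsub, hchain⟩ := key C' hC'
  exact Set.mem_sUnion.2 ⟨D'', hchain, hsub hxC'⟩

/-- The final step: if `W` is contained in a single cluster `D` of a good partition `Q`,
and every vertex outside `W` is dominated, then one more step yields `{univ}`. -/
lemma final_step (E : Fin r → Set (Sym2 V)) (W : Set V) {Q : Set (Set V)}
    (hQ : GoodPart Q) {D : Set V} (hD : D ∈ Q) (hWD : W ⊆ D)
    (hdom : ∀ v : V, v ∉ W → ∀ i : Fin r, ∃ w ∈ W, s(v, w) ∈ E i) :
    nextPart E Q = {Set.univ} := by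
  obtain ⟨hcov, hne, hdisj⟩ := hQ
  have hstep : ∀ C ∈ Q, Relation.ReflTransGen (AuxRel E Q) D C := by
    intro C hC
    by_cases hCD : C = D
    · exact hCD ▸ Relation.ReflTransGen.refl
    · refine Relation.ReflTransGen.single (auxRel_symm ⟨hC, hD, hCD, fun i => ?_⟩)
      obtain ⟨v, hv⟩ := hne C hC
      have hvW : v ∉ W := fun hvW =>
        Set.disjoint_left.1 (hdisj C hC D hD hCD) hv (hWD hvW)
      obtain ⟨w, hwW, he⟩ := hdom v hvW i
      exact ⟨v, hv, w, hWD hwW, he⟩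
  have hclassD : ⋃₀ {C' | Relation.ReflTransGen (AuxRel E Q) D C'} = Set.univ := by
    apply Set.eq_univ_of_univ_subset
    rw [← hcov]
    rintro x ⟨C, hC, hx⟩
    exact Set.mem_sUnion.2 ⟨C, hstep C hC, hx⟩
  ext S
  simp only [nextPart, Set.mem_setOf_eq, Set.mem_singleton_iff]
  constructor
  · rintro ⟨C, hC, rfl⟩
    apply Set.eq_univ_of_univ_subset
    rw [← hclassD]
    rintro x ⟨C', hC', hx⟩
    exact Set.mem_sUnion.2 ⟨C', ((rtg_symm (hstep C hC)).trans hC' : _), hx⟩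
  · rintro rfl
    exact ⟨D, hD, hclassD.symm⟩

/-- If `W` percolates in the `r`-fold graph `G` and every vertex outside `W`
is joined to `W` by an edge of every colour, then `G` percolates. -/
theorem percolates_of_percolating_subset_dominating (n r : ℕ)
    (E : Fin r → Set (Sym2 (Fin n))) (W : Set (Fin n))
    (hW : PercolatesOn E W)
    (hdom : ∀ v : Fin n, v ∉ W → ∀ i : Fin r, ∃ w ∈ W, s(v, w) ∈ E i) :
    Percolates E := by
  classical
  obtain ⟨t, ht⟩ := hW
  -- W is nonempty
  have hWne : W.Nonempty := by
    rcases W.eq_empty_or_nonempty with h | h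
    · exfalso
      subst h
      have h0 : {S : Set (Fin n) | ∃ v ∈ (∅ : Set (Fin n)), S = {v}} = ∅ := by
        ext S; simp
      rw [h0] at ht
      have hfix : (nextPart E)^[t] (∅ : Set (Set (Fin n))) = ∅ := by
        apply Function.iterate_fixed
        ext S; simp [nextPart]
      rw [hfix] at ht
      exact (Set.singleton_ne_empty (∅ : Set (Fin n))) ht.symm
    · exact h
  set Q : ℕ → Set (Set (Fin n)) :=
    fun s => (nextPart E)^[s] {S | ∃ v ∈ (Set.univ : Set (Fin n)), S = {v}} with hQdef
  set P : ℕ → Set (Set (Fin n)) :=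
    fun s => (nextPart E)^[s] {S | ∃ v ∈ W, S = {v}} with hPdef
  have key : ∀ s : ℕ, GoodPart (Q s) ∧ ∀ C ∈ P s, ∃ D ∈ Q s, C ⊆ D := by
    intro s
    induction s with
    | zero =>
      refine ⟨⟨?_, ?_, ?_⟩, ?_⟩
      · apply Set.eq_univ_of_univ_subset
        intro x _
        exact ⟨{x}, ⟨x, Set.mem_univ x, rfl⟩, rfl⟩
      · rintro C ⟨v, -, rfl⟩
        exact ⟨v, rfl⟩
      · rintro C ⟨v, -, rfl⟩ C' ⟨v', -, rfl⟩ hne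
        simp only [Set.disjoint_singleton_left, Set.mem_singleton_iff]
        intro hvv'
        exact hne (by rw [hvv'])
      · rintro C ⟨v, hv, rfl⟩
        exact ⟨{v}, ⟨v, Set.mem_univ v, rfl⟩, subset_rfl⟩
    | succ s ih =>
      have hQs : Q (s + 1) = nextPart E (Q s) := Function.iterate_succ_apply' _ _ _
      have hPs : P (s + 1) = nextPart E (P s) := Function.iterate_succ_apply' _ _ _
      rw [hQs, hPs]
      exact ⟨good_next E ih.1, coarser_next E ih.2⟩
  obtain ⟨hgood, hcoarse⟩ := key t
  have hWt : W ∈ P t := by rw [hPdef]; simp only [ht]; rfl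
  obtain ⟨D, hD, hWD⟩ := hcoarse W hWt
  refine ⟨t + 1, ?_⟩
  have : (nextPart E)^[t + 1] {S | ∃ v ∈ (Set.univ : Set (Fin n)), S = {v}}
      = nextPart E (Q t) := Function.iterate_succ_apply' _ _ _
  rw [this]
  exact final_step E W hgood hD hWD hdom

end Jigsaw
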